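/- Let 0 < p < q, ν' = −1/q, and define J(s,x) = C_{p,ν'} ∫_0^∞ ((s − x^q v)_+)^{−pν'} v^{ν'−1} (∫_0^∞ λ^{2(p−1)ν'+1}/(1 + q²λ²/8) · exp(−λ²/(4v)) dλ) dv with C_{p,ν'} = 1/(2^{2(p−1)ν'+1} Γ(1−pν') Γ(1+pν') Γ(1+(p−1)ν')). Then J(s,x) ≤ (2Γ(1+1/q)/(pΓ(1+1/q−p/q))) · (q²/2)^{p/q} · s^{p/q} for all s, x ≥ 0. -/

import Mathlib

open MeasureTheory Real Set

/-- Tonelli-type swap/evaluation for nonnegative functions on `Ioi 0 × Ioi 0`. -/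
lemma key_swap {F : ℝ → ℝ → ℝ} {G : ℝ → ℝ}
    (hFm : AEStronglyMeasurable (fun z : ℝ × ℝ => F z.1 z.2)
      ((volume.restrict (Ioi 0)).prod (volume.restrict (Ioi 0))))
    (hF0 : ∀ x ∈ Ioi (0:ℝ), ∀ y ∈ Ioi (0:ℝ), 0 ≤ F x y)
    (hFx : ∀ x ∈ Ioi (0:ℝ), IntegrableOn (F x) (Ioi 0))
    (hFy : ∀ y ∈ Ioi (0:ℝ), IntegrableOn (fun x => F x y) (Ioi 0))
    (hG : ∀ y ∈ Ioi (0:ℝ), (∫ x in Ioi 0, F x y) = G y)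
    (hGi : IntegrableOn G (Ioi 0)) :
    (∫ x in Ioi 0, ∫ y in Ioi 0, F x y) = (∫ y in Ioi 0, G y) ∧
      IntegrableOn (fun x => ∫ y in Ioi 0, F x y) (Ioi 0) := by
  set μ := volume.restrict (Ioi (0:ℝ))
  have hG0 : ∀ y ∈ Ioi (0:ℝ), 0 ≤ G y := by
    intro y hy
    rw [← hG y hy]
    exact setIntegral_nonneg measurableSet_Ioi fun x hx => hF0 x hx y hy
  -- measurability of the ENNReal-valued kernel
  have hFme : AEMeasurable (fun z : ℝ × ℝ => ENNReal.ofReal (F z.1 z.2)) (μ.prod μ) :=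
    ENNReal.measurable_ofReal.comp_aemeasurable hFm.aemeasurable
  -- inner conversion
  have h1 : ∀ x ∈ Ioi (0:ℝ),
      ENNReal.ofReal (∫ y in Ioi 0, F x y) = ∫⁻ y in Ioi 0, ENNReal.ofReal (F x y) := by
    intro x hx
    refine ofReal_integral_eq_lintegral_ofReal (hFx x hx) ?_
    filter_upwards [ae_restrict_mem measurableSet_Ioi] with y hy using hF0 x hx y hy
  have h2 : ∀ y ∈ Ioi (0:ℝ),
      (∫⁻ x in Ioi 0, ENNReal.ofReal (F x y)) = ENNReal.ofReal (G y) := by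
    intro y hy
    rw [← hG y hy]
    refine (ofReal_integral_eq_lintegral_ofReal (hFy y hy) ?_).symm
    filter_upwards [ae_restrict_mem measurableSet_Ioi] with x hx using hF0 x hx y hy
  have hswap : (∫⁻ x in Ioi 0, ∫⁻ y in Ioi 0, ENNReal.ofReal (F x y)) =
      ∫⁻ y in Ioi 0, ∫⁻ x in Ioi 0, ENNReal.ofReal (F x y) :=
    lintegral_lintegral_swap hFme
  have hkey : (∫⁻ x in Ioi 0, ENNReal.ofReal (∫ y in Ioi 0, F x y)) = ENNReal.ofReal (∫ y in Ioi 0, G y) := by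
    rw [setLIntegral_congr_fun measurableSet_Ioi h1, hswap,
      setLIntegral_congr_fun measurableSet_Ioi h2]
    refine ofReal_integral_eq_lintegral_ofReal hGi ?_ |>.symm
    filter_upwards [ae_restrict_mem measurableSet_Ioi] with y hy using hG0 y hy
  have hIm : AEStronglyMeasurable (fun x => ∫ y in Ioi 0, F x y) μ :=
    hFm.integral_prod_right'
  have hI0 : 0 ≤ᵐ[μ] fun x => ∫ y in Ioi 0, F x y := by
    filter_upwards [ae_restrict_mem measurableSet_Ioi] with x hx
    exact setIntegral_nonneg measurableSet_Ioi fun y hy => hF0 x hx y hy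
  constructor
  · rw [integral_eq_lintegral_of_nonneg_ae hI0 hIm, hkey, ENNReal.toReal_ofReal]
    exact setIntegral_nonneg measurableSet_Ioi hG0
  · refine ⟨hIm, ?_⟩
    rw [hasFiniteIntegral_iff_ofReal hI0, hkey]
    exact ENNReal.ofReal_lt_top

lemma L1 {s b : ℝ} (hs : -1 < s) (hb : 0 < b) :
    IntegrableOn (fun x : ℝ => x ^ s * Real.exp (-(b * x))) (Ioi 0) := by
  have := integrableOn_rpow_mul_exp_neg_mul_rpow hs one_pos hb
  refine this.congr_fun (fun x hx => ?_) measurableSet_Ioi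
  simp only [Real.rpow_one]
  ring_nf

lemma L2 {a r : ℝ} (ha : 0 < a) (hr : 0 < r) :
    ∫ t : ℝ in Ioi 0, t ^ (a - 1) * Real.exp (-(r * t)) = r ^ (-a) * Real.Gamma a := by
  rw [Real.integral_rpow_mul_exp_neg_mul_Ioi ha hr, one_div, ← Real.rpow_neg_one,
    ← Real.rpow_mul hr.le, neg_one_mul]

lemma LA_aux {a c x : ℝ} (hx0 : (0:ℝ) < x) :
    (|(-1:ℝ)| * x ^ ((-1:ℝ) - 1)) • ((x ^ (-1:ℝ)) ^ (a - 1) * Real.exp (-(c * x ^ (-1:ℝ)))) =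
      x ^ (-a - 1) * Real.exp (-(c / x)) := by
  rw [smul_eq_mul, Real.rpow_neg_one, Real.inv_rpow hx0.le, ← Real.rpow_neg hx0.le,
    ← div_eq_mul_inv, abs_neg, abs_one, one_mul, ← mul_assoc, ← Real.rpow_add hx0,
    show (-1:ℝ) - 1 + -(a - 1) = -a - 1 by ring]

/-- Integrability for Lemma A : `v ^ (-a-1) * exp (-(c/v))` on `Ioi 0`. -/
lemma LA_int {a c : ℝ} (ha : 0 < a) (hc : 0 < c) :
    IntegrableOn (fun v : ℝ => v ^ (-a - 1) * Real.exp (-(c / v))) (Ioi 0) := by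
  have h := (integrableOn_Ioi_comp_rpow_iff
      (fun y : ℝ => y ^ (a - 1) * Real.exp (-(c * y))) (p := -1) (by norm_num)).mpr
      (L1 (by linarith) hc)
  exact h.congr_fun (fun x hx => LA_aux hx) measurableSet_Ioi

/-- Lemma A: `∫ v^(-a-1) exp(-(c/v)) dv = c^(-a) Γ(a)`. -/
lemma LA_val {a c : ℝ} (ha : 0 < a) (hc : 0 < c) :
    ∫ v in Ioi (0:ℝ), v ^ (-a - 1) * Real.exp (-(c / v)) = c ^ (-a) * Real.Gamma a := by
  rw [← L2 ha hc, ← integral_comp_rpow_Ioi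
    (fun y : ℝ => y ^ (a - 1) * Real.exp (-(c * y))) (p := -1) (by norm_num)]
  exact setIntegral_congr_fun measurableSet_Ioi (fun x hx => (LA_aux hx).symm)

lemma L4 {r : ℝ} (hr : 0 < r) : ∫ u in Ioi (0:ℝ), Real.exp (-(r * u)) = r⁻¹ := by
  have h := L2 (a := 1) one_pos hr
  simpa [Real.Gamma_one, Real.rpow_neg_one] using h

lemma L4_int {r : ℝ} (hr : 0 < r) : IntegrableOn (fun u : ℝ => Real.exp (-(r * u))) (Ioi 0) := by
  have := exp_neg_integrableOn_Ioi 0 hr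
  exact this.congr_fun (fun x _ => by simp only [neg_mul]) measurableSet_Ioi

/-- Lemma B, c = 1 : `∫ x^(t-1)/(1+x) dx = Γ(t)Γ(1-t)` for `0 < t < 1`. -/
lemma LB1 {t : ℝ} (ht0 : 0 < t) (ht1 : t < 1) :
    (∫ x in Ioi (0:ℝ), x ^ (t - 1) / (1 + x)) = Real.Gamma t * Real.Gamma (1 - t) := by
  set F : ℝ → ℝ → ℝ := fun x u => x ^ (t - 1) * Real.exp (-((1 + x) * u)) with hF
  set G : ℝ → ℝ := fun u => Real.exp (-u) * (u ^ (-t) * Real.Gamma t) with hGdef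
  have hFm : AEStronglyMeasurable (fun z : ℝ × ℝ => F z.1 z.2)
      ((volume.restrict (Ioi 0)).prod (volume.restrict (Ioi 0))) := by
    apply Measurable.aestronglyMeasurable
    fun_prop
  have hFx : ∀ x ∈ Ioi (0:ℝ), IntegrableOn (F x) (Ioi 0) := by
    intro x hx
    have : (0:ℝ) < 1 + x := by have : (0:ℝ) < x := hx; linarith
    exact (L4_int this).const_mul _
  have hFy : ∀ u ∈ Ioi (0:ℝ), IntegrableOn (fun x => F x u) (Ioi 0) := by
    intro u hu
    have hu0 : (0:ℝ) < u := hu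
    have := (L1 (by linarith : (-1:ℝ) < t - 1) hu0).mul_const (Real.exp (-u))
    refine IntegrableOn.congr_fun this (fun x _ => ?_) measurableSet_Ioi
    rw [hF, mul_assoc, ← Real.exp_add]
    ring_nf
  have hG : ∀ u ∈ Ioi (0:ℝ), (∫ x in Ioi 0, F x u) = G u := by
    intro u hu
    have hu0 : (0:ℝ) < u := hu
    have : ∀ x ∈ Ioi (0:ℝ), F x u = (x ^ (t - 1) * Real.exp (-(u * x))) * Real.exp (-u) := by
      intro x _
      rw [hF, mul_assoc, ← Real.exp_add]
      ring_nf
    rw [setIntegral_congr_fun measurableSet_Ioi this, integral_mul_const, L2 ht0 hu0]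
    rw [hGdef]
    ring
  have hGi : IntegrableOn G (Ioi 0) := by
    have := ((L1 (by linarith : (-1:ℝ) < -t) one_pos).mul_const (Real.Gamma t))
    refine IntegrableOn.congr_fun this (fun u _ => ?_) measurableSet_Ioi
    rw [hGdef]
    ring_nf
  have hF0 : ∀ x ∈ Ioi (0:ℝ), ∀ u ∈ Ioi (0:ℝ), 0 ≤ F x u := by
    intro x hx u hu
    have : (0:ℝ) < x := hx
    positivity
  obtain ⟨hswap, -⟩ := key_swap hFm hF0 hFx hFy hG hGi
  have hL : ∀ x ∈ Ioi (0:ℝ), (∫ u in Ioi 0, F x u) = x ^ (t - 1) / (1 + x) := by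
    intro x hx
    have hx1 : (0:ℝ) < 1 + x := by have : (0:ℝ) < x := hx; linarith
    rw [hF]
    simp only
    rw [integral_const_mul, L4 hx1, div_eq_mul_inv]
  have hR : (∫ u in Ioi 0, G u) = Real.Gamma t * Real.Gamma (1 - t) := by
    have : ∀ u ∈ Ioi (0:ℝ), G u = (u ^ ((1 - t) - 1) * Real.exp (-(1 * u))) * Real.Gamma t := by
      intro u _
      rw [hGdef, show (1 - t) - 1 = -t by ring, one_mul]
      ring
    rw [setIntegral_congr_fun measurableSet_Ioi this, integral_mul_const, L2 (by linarith) one_pos,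
      Real.one_rpow, one_mul]
    ring
  rw [← setIntegral_congr_fun measurableSet_Ioi hL, hswap, hR]

/-- Lemma B : `∫ x^(t-1)/(1+c*x) dx = c^(-t) Γ(t)Γ(1-t)`. -/
lemma LB {t c : ℝ} (ht0 : 0 < t) (ht1 : t < 1) (hc : 0 < c) :
    (∫ x in Ioi (0:ℝ), x ^ (t - 1) / (1 + c * x)) =
      c ^ (-t) * (Real.Gamma t * Real.Gamma (1 - t)) := by
  have h := integral_comp_mul_left_Ioi (fun y : ℝ => y ^ (t - 1) / (1 + y)) 0 hc
  rw [mul_zero] at h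
  have h2 : ∀ x ∈ Ioi (0:ℝ), (fun y : ℝ => y ^ (t - 1) / (1 + y)) (c * x) =
      c ^ (t - 1) * (x ^ (t - 1) / (1 + c * x)) := by
    intro x hx
    have hx0 : (0:ℝ) < x := hx
    simp only
    rw [Real.mul_rpow hc.le hx0.le]
    ring
  rw [setIntegral_congr_fun measurableSet_Ioi h2, integral_const_mul, LB1 ht0 ht1,
    smul_eq_mul] at h
  have hc' : (c : ℝ) ^ (t - 1) ≠ 0 := (Real.rpow_pos_of_pos hc _).ne'
  have h3 : (∫ x in Ioi (0:ℝ), x ^ (t - 1) / (1 + c * x)) =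
      (c ^ (t - 1))⁻¹ * (c⁻¹ * (Real.Gamma t * Real.Gamma (1 - t))) := by
    rw [← h, inv_mul_cancel_left₀ hc']
  rw [h3, ← Real.rpow_neg hc.le, ← Real.rpow_neg_one c, ← mul_assoc, ← Real.rpow_add hc,
    show -(t - 1) + -1 = -t by ring]

lemma LC_int {w c : ℝ} (hw0 : -1 < w) (hw1 : w < 1) (hc : 0 < c) :
    IntegrableOn (fun l : ℝ => l ^ w / (1 + c * l ^ 2)) (Ioi 0) := by
  have hmeas : AEStronglyMeasurable (fun l : ℝ => l ^ w / (1 + c * l ^ 2)) volume := by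
    apply Measurable.aestronglyMeasurable
    fun_prop
  have h1 : IntegrableOn (fun l : ℝ => l ^ w / (1 + c * l ^ 2)) (Ioc 0 1) := by
    have hb : IntegrableOn (fun l : ℝ => l ^ w) (Ioc 0 1) := by
      have h := (intervalIntegral.integrableOn_Ioo_rpow_iff one_pos).mpr hw0
      rwa [IntegrableOn, ← Measure.restrict_congr_set Ioo_ae_eq_Ioc]
    refine Integrable.mono' hb (hmeas.restrict) ?_
    filter_upwards [ae_restrict_mem measurableSet_Ioc] with l hl
    have hl0 : (0:ℝ) < l := hl.1
    have hpos : (0:ℝ) < 1 + c * l ^ 2 := by positivity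
    rw [Real.norm_eq_abs, abs_of_nonneg (by positivity)]
    calc l ^ w / (1 + c * l ^ 2) ≤ l ^ w / 1 := by
          apply div_le_div_of_nonneg_left (by positivity) one_pos
          nlinarith [sq_nonneg l]
      _ = l ^ w := div_one _
  have h2 : IntegrableOn (fun l : ℝ => l ^ w / (1 + c * l ^ 2)) (Ioi 1) := by
    have hb : IntegrableOn (fun l : ℝ => c⁻¹ * l ^ (w - 2)) (Ioi 1) :=
      (integrableOn_Ioi_rpow_of_lt (by linarith) one_pos).const_mul _
    refine Integrable.mono' hb (hmeas.restrict) ?_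
    filter_upwards [ae_restrict_mem measurableSet_Ioi] with l hl
    have hl1 : (1:ℝ) < l := hl
    have hl0 : (0:ℝ) < l := by linarith
    rw [Real.norm_eq_abs, abs_of_nonneg (by positivity)]
    have h2' : l ^ w / (1 + c * l ^ 2) ≤ l ^ w / (c * l ^ 2) := by
      apply div_le_div_of_nonneg_left (by positivity) (by positivity)
      nlinarith
    refine h2'.trans_eq ?_
    have h2ne : l ^ (2:ℝ) ≠ 0 := (Real.rpow_pos_of_pos hl0 _).ne'
    rw [show (l:ℝ) ^ (2:ℕ) = l ^ (2:ℝ) by rw [← Real.rpow_natCast l 2]; norm_num,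
      Real.rpow_sub hl0]
    field_simp
  have := h1.union h2
  rwa [Set.Ioc_union_Ioi_eq_Ioi zero_le_one] at this

/-- Lemma C : `∫ l^w/(1+c l²) dl = (1/2) c^(-(w+1)/2) Γ((w+1)/2) Γ(1-(w+1)/2)`. -/
lemma LC_val {w c : ℝ} (hw0 : -1 < w) (hw1 : w < 1) (hc : 0 < c) :
    (∫ l in Ioi (0:ℝ), l ^ w / (1 + c * l ^ 2)) =
      (1 / 2) * ((c ^ (-((w + 1) / 2))) *
        (Real.Gamma ((w + 1) / 2) * Real.Gamma (1 - (w + 1) / 2))) := by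
  set t : ℝ := (w + 1) / 2 with ht
  have ht0 : 0 < t := by rw [ht]; linarith
  have ht1 : t < 1 := by rw [ht]; linarith
  have h := integral_comp_rpow_Ioi (fun y : ℝ => (1 / 2) * (y ^ (t - 1) / (1 + c * y)))
    (p := 2) two_ne_zero
  have h2 : ∀ x ∈ Ioi (0:ℝ),
      (|(2:ℝ)| * x ^ ((2:ℝ) - 1)) • ((1 / 2) * ((x ^ (2:ℝ)) ^ (t - 1) / (1 + c * x ^ (2:ℝ)))) =
        x ^ w / (1 + c * x ^ 2) := by
    intro x hx
    have hx0 : (0:ℝ) < x := hx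
    have e2 : x ^ (2:ℝ) = x ^ (2:ℕ) := by rw [← Real.rpow_natCast x 2]; norm_num
    have hxx := Real.rpow_add hx0 1 (w - 1)
    rw [Real.rpow_one, show (1:ℝ) + (w - 1) = w by ring] at hxx
    rw [smul_eq_mul, ← Real.rpow_mul hx0.le, show (2:ℝ) * (t - 1) = w - 1 by rw [ht]; ring,
      e2, show |(2:ℝ)| = 2 from abs_of_pos two_pos, show (2:ℝ) - 1 = 1 by norm_num,
      Real.rpow_one, hxx]
    ring
  rw [← setIntegral_congr_fun measurableSet_Ioi h2, h, integral_const_mul, LB ht0 ht1 hc]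

lemma main_eval {p q : ℝ} (hp : 0 < p) (hpq : p < q) :
    ((∫ v in Ioi (0:ℝ), v ^ ((-1/q) - 1) * ∫ l in Ioi (0:ℝ),
        l ^ (2*(p-1)*(-1/q)+1) / (1 + q^2*l^2/8) * Real.exp (-l^2/(4*v)))
      = Real.Gamma (1/q) * 4 ^ ((1:ℝ)/q) *
        ((1/2) * ((q^2/8) ^ (-(1 - p/q)) * (Real.Gamma (1 - p/q) * Real.Gamma (p/q))))) ∧
    IntegrableOn (fun v => v ^ ((-1/q) - 1) * ∫ l in Ioi (0:ℝ),
        l ^ (2*(p-1)*(-1/q)+1) / (1 + q^2*l^2/8) * Real.exp (-l^2/(4*v))) (Ioi 0) := by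
  have hq : 0 < q := hp.trans hpq
  have hq' : q ≠ 0 := hq.ne'
  set u : ℝ := 2*(p-1)*(-1/q)+1 with hu
  set c : ℝ := q^2/8 with hcdef
  have hc : 0 < c := by positivity
  have hpq1 : p / q < 1 := (div_lt_one hq).mpr hpq
  have hpq0 : 0 < p / q := by positivity
  have hu1 : -1 < u := by
    rw [hu]
    have h1 : (p - 1) / q < 1 := by rw [div_lt_one hq]; linarith
    have h2 : 2*(p-1)*(-1/q) = -(2*((p-1)/q)) := by ring
    rw [h2]; linarith
  set w : ℝ := u - 2*(1/q) with hw
  have hww : w = 1 - 2*(p/q) := by rw [hw, hu]; field_simp; ring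
  have hw0 : -1 < w := by rw [hww]; linarith
  have hw1 : w < 1 := by rw [hww]; linarith
  have ha : 0 < 1/q := by positivity
  set F : ℝ → ℝ → ℝ := fun v l =>
    (l ^ u / (1 + c * l ^ 2)) * (v ^ (-(1/q) - 1) * Real.exp (-(l^2/4/v))) with hF
  set G : ℝ → ℝ := fun l =>
    (Real.Gamma (1/q) * 4 ^ ((1:ℝ)/q)) * (l ^ w / (1 + c * l ^ 2)) with hG
  have hFm : AEStronglyMeasurable (fun z : ℝ × ℝ => F z.1 z.2)
      ((volume.restrict (Ioi 0)).prod (volume.restrict (Ioi 0))) := by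
    apply Measurable.aestronglyMeasurable
    fun_prop
  have hF0 : ∀ v ∈ Ioi (0:ℝ), ∀ l ∈ Ioi (0:ℝ), 0 ≤ F v l := by
    intro v hv l hl
    have h1 : (0:ℝ) < v := hv
    have h2 : (0:ℝ) < l := hl
    rw [hF]
    positivity
  have hFx : ∀ v ∈ Ioi (0:ℝ), IntegrableOn (F v) (Ioi 0) := by
    intro v hv
    have hv0 : (0:ℝ) < v := hv
    have hb : (0:ℝ) < 1/(4*v) := by positivity
    have hmaj := (integrableOn_rpow_mul_exp_neg_mul_rpow hu1 two_pos hb).const_mul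
      (v ^ (-(1/q) - 1))
    refine Integrable.mono' hmaj ?_ ?_
    · apply Measurable.aestronglyMeasurable
      fun_prop
    filter_upwards [ae_restrict_mem measurableSet_Ioi] with l hl
    have hl0 : (0:ℝ) < l := hl
    rw [Real.norm_eq_abs, abs_of_nonneg (hF0 v hv l hl)]
    have e2 : l ^ (2:ℝ) = l ^ (2:ℕ) := by rw [← Real.rpow_natCast l 2]; norm_num
    rw [hF]
    simp only
    rw [e2, show -(1/(4*v)) * (l:ℝ) ^ (2:ℕ) = -(l^2/4/v) by ring]
    have hden : 1 ≤ 1 + c * l ^ 2 := by nlinarith [sq_nonneg l, hc.le]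
    have hl' : (0:ℝ) ≤ l ^ u := (Real.rpow_pos_of_pos hl0 _).le
    have h1 : l ^ u / (1 + c * l ^ 2) ≤ l ^ u := div_le_self hl' hden
    calc l ^ u / (1 + c * l ^ 2) * (v ^ (-(1/q) - 1) * Real.exp (-(l^2/4/v)))
        ≤ l ^ u * (v ^ (-(1/q) - 1) * Real.exp (-(l^2/4/v))) :=
          mul_le_mul_of_nonneg_right h1 (by positivity)
      _ = v ^ (-(1/q) - 1) * (l ^ u * Real.exp (-(l^2/4/v))) := by ring
  have hFy : ∀ l ∈ Ioi (0:ℝ), IntegrableOn (fun v => F v l) (Ioi 0) := by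
    intro l hl
    have hl0 : (0:ℝ) < l := hl
    have hc2 : (0:ℝ) < l^2/4 := by positivity
    exact (LA_int ha hc2).const_mul _
  have hGeq : ∀ l ∈ Ioi (0:ℝ), (∫ v in Ioi 0, F v l) = G l := by
    intro l hl
    have hl0 : (0:ℝ) < l := hl
    have hc2 : (0:ℝ) < l^2/4 := by positivity
    rw [hF]
    simp only
    rw [integral_const_mul, LA_val ha hc2, hG]
    have e1 : (l^2/4 : ℝ) ^ (-(1/q)) = l ^ (-(2*(1/q))) * 4 ^ ((1:ℝ)/q) := by
      have e2 : (l:ℝ)^(2:ℕ) = l ^ (2:ℝ) := by rw [← Real.rpow_natCast l 2]; norm_num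
      rw [div_eq_mul_inv, e2, Real.mul_rpow (by positivity) (by positivity),
        ← Real.rpow_mul hl0.le, show (2:ℝ) * (-(1/q)) = -(2*(1/q)) by ring,
        ← Real.rpow_neg_one (4:ℝ), ← Real.rpow_mul (by norm_num : (0:ℝ) ≤ 4),
        show (-1:ℝ) * (-(1/q)) = 1/q by ring]
    rw [e1]
    have e3 : l ^ u / (1 + c * l ^ 2) * (l ^ (-(2*(1/q))) * 4 ^ ((1:ℝ)/q) * Real.Gamma (1/q))
        = (l ^ u * l ^ (-(2*(1/q)))) / (1 + c * l ^ 2) * (4 ^ ((1:ℝ)/q) * Real.Gamma (1/q)) := by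
      ring
    rw [e3, ← Real.rpow_add hl0, show u + -(2*(1/q)) = w from by rw [hw]; ring]
    ring
  have hGi : IntegrableOn G (Ioi 0) := (LC_int hw0 hw1 hc).const_mul _
  obtain ⟨hswap, hint⟩ := key_swap hFm hF0 hFx hFy hGeq hGi
  -- identify the inner integral with the Jfun form
  have hinner : ∀ v ∈ Ioi (0:ℝ), (∫ l in Ioi 0, F v l)
      = v ^ ((-1/q) - 1) * ∫ l in Ioi (0:ℝ),
          l ^ u / (1 + q^2*l^2/8) * Real.exp (-l^2/(4*v)) := by
    intro v hv
    rw [← integral_const_mul]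
    refine setIntegral_congr_fun measurableSet_Ioi (fun l hl => ?_)
    rw [hF]
    simp only
    rw [show (-(l^2/4/v) : ℝ) = -l^2/(4*v) by ring,
      show ((-1/q) - 1 : ℝ) = -(1/q) - 1 by ring, hcdef]
    ring
  have hGval : (∫ l in Ioi 0, G l) = Real.Gamma (1/q) * 4 ^ ((1:ℝ)/q) *
      ((1/2) * ((q^2/8) ^ (-(1 - p/q)) * (Real.Gamma (1 - p/q) * Real.Gamma (p/q)))) := by
    rw [hG]
    rw [integral_const_mul, LC_val hw0 hw1 hc,
      show ((w+1)/2 : ℝ) = 1 - p/q by rw [hww]; ring, hcdef,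
      show (1 - (1 - p/q) : ℝ) = p/q by ring]
  constructor
  · rw [← setIntegral_congr_fun measurableSet_Ioi hinner, hswap, hGval]
  · exact hint.congr_fun hinner measurableSet_Ioi

lemma hpow_lemma {p q : ℝ} (hp : 0 < p) (hpq : p < q) :
    (4:ℝ) ^ ((1:ℝ)/q) * (q^2/8) ^ (-(1-p/q)) / 2 ^ (2*(p-1)*(-1/q)+1)
      = 4 * (q^2/2) ^ (p/q) / q^2 := by
  have hq : 0 < q := hp.trans hpq
  have hq' : q ≠ 0 := hq.ne'
  have hX : (0:ℝ) < 4 ^ ((1:ℝ)/q) * (q^2/8) ^ (-(1-p/q)) / 2 ^ (2*(p-1)*(-1/q)+1) := by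
    positivity
  have hY : (0:ℝ) < 4 * (q^2/2) ^ (p/q) / q^2 := by positivity
  have h4 : Real.log 4 = 2 * Real.log 2 := by
    rw [show (4:ℝ) = 2^(2:ℕ) by norm_num, Real.log_pow]; push_cast; ring
  have h8 : Real.log 8 = 3 * Real.log 2 := by
    rw [show (8:ℝ) = 2^(3:ℕ) by norm_num, Real.log_pow]; push_cast; ring
  have hq2 : Real.log (q^2) = 2 * Real.log q := by
    rw [Real.log_pow]; push_cast; ring
  apply Real.log_injOn_pos (mem_Ioi.mpr hX) (mem_Ioi.mpr hY)
  rw [Real.log_div (by positivity) (by positivity), Real.log_mul (by positivity) (by positivity),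
    Real.log_rpow (by norm_num), Real.log_rpow (by positivity),
    Real.log_rpow (by norm_num : (0:ℝ) < 2), Real.log_div (by positivity) (by positivity)]
  rw [Real.log_div (by positivity) (by positivity), Real.log_mul (by norm_num) (by positivity),
    Real.log_rpow (by positivity), Real.log_div (by positivity) (by norm_num), h4, h8, hq2]
  field_simp
  ring

lemma const_eq {p q : ℝ} (hp : 0 < p) (hpq : p < q) :
    (1 / (2 ^ (2*(p-1)*(-1/q)+1) * Real.Gamma (1+p/q) * Real.Gamma (1-p/q) *
        Real.Gamma (1+1/q-p/q))) *
      (Real.Gamma (1/q) * 4 ^ ((1:ℝ)/q) *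
        ((1/2) * ((q^2/8) ^ (-(1-p/q)) * (Real.Gamma (1-p/q) * Real.Gamma (p/q)))))
    = 2 * Real.Gamma (1+1/q) / (p * Real.Gamma (1+1/q-p/q)) * (q^2/2) ^ (p/q) := by
  have hq : 0 < q := hp.trans hpq
  have hq' : q ≠ 0 := hq.ne'
  have hP0 : 0 < p/q := by positivity
  have hP1 : p/q < 1 := (div_lt_one hq).mpr hpq
  have hA0 : 0 < 1/q := by positivity
  have hpow := hpow_lemma hp hpq
  rw [show (1+p/q:ℝ) = p/q + 1 by ring, Real.Gamma_add_one hP0.ne',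
    show (1+1/q:ℝ) = 1/q + 1 by ring, Real.Gamma_add_one hA0.ne']
  rw [show (1/q + 1 - p/q : ℝ) = 1+1/q-p/q by ring]
  set G1 := Real.Gamma (p/q) with hG1d
  set G2 := Real.Gamma (1-p/q) with hG2d
  set G3 := Real.Gamma (1+1/q-p/q) with hG3d
  set G4 := Real.Gamma (1/q) with hG4d
  set T2 : ℝ := 2 ^ (2*(p-1)*(-1/q)+1) with hT2d
  set F4 : ℝ := (4:ℝ) ^ ((1:ℝ)/q) with hF4d
  set F8 : ℝ := (q^2/8) ^ (-(1-p/q)) with hF8d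
  set FY : ℝ := (q^2/2) ^ (p/q) with hFYd
  have hG1 : 0 < G1 := Real.Gamma_pos_of_pos hP0
  have hG2 : 0 < G2 := Real.Gamma_pos_of_pos (by linarith)
  have hG3 : 0 < G3 := Real.Gamma_pos_of_pos (by linarith)
  have hG4 : 0 < G4 := Real.Gamma_pos_of_pos hA0
  have hT2 : (0:ℝ) < T2 := by rw [hT2d]; positivity
  have hpow' : F4 * F8 * q^2 = 4 * FY * T2 :=
    (div_eq_div_iff hT2.ne' (by positivity)).mp hpow
  field_simp [hG1.ne', hG2.ne', hG3.ne', hG4.ne', hT2.ne']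
  linear_combination hpow'

/-- The function `J(s,x)` of Section 4, with `ν' = −1/q`. -/
noncomputable def Jfun (p q s x : ℝ) : ℝ :=
  (1 / (2 ^ (2 * (p - 1) * (-1 / q) + 1) * Real.Gamma (1 - p * (-1 / q)) *
      Real.Gamma (1 + p * (-1 / q)) * Real.Gamma (1 + (p - 1) * (-1 / q)))) *
    ∫ v in Set.Ioi (0 : ℝ),
      (max (s - x ^ q * v) 0) ^ (-(p * (-1 / q))) * v ^ ((-1 / q) - 1) *
        ∫ l in Set.Ioi (0 : ℝ),
          l ^ (2 * (p - 1) * (-1 / q) + 1) / (1 + q ^ 2 * l ^ 2 / 8) *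
            Real.exp (-l ^ 2 / (4 * v))

theorem Jfun_upper_bound (p q : ℝ) (hp : 0 < p) (hpq : p < q)
    (s x : ℝ) (hs : 0 ≤ s) (hx : 0 ≤ x) :
    Jfun p q s x ≤
      (2 * Real.Gamma (1 + 1 / q) / (p * Real.Gamma (1 + 1 / q - p / q))) *
        (q ^ 2 / 2) ^ (p / q) * s ^ (p / q) := by
  have hq : 0 < q := hp.trans hpq
  have hq' : q ≠ 0 := hq.ne'
  have hP0 : 0 < p/q := by positivity
  have hP1 : p/q < 1 := (div_lt_one hq).mpr hpq
  have hA0 : 0 < 1/q := by positivity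
  obtain ⟨hval, hint⟩ := main_eval hp hpq
  rw [Jfun]
  rw [show (1 - p * (-1/q) : ℝ) = 1 + p/q by ring,
    show (1 + p * (-1/q) : ℝ) = 1 - p/q by ring,
    show (1 + (p-1) * (-1/q) : ℝ) = 1 + 1/q - p/q by ring]
  simp only [show (-(p * (-1/q)) : ℝ) = p/q from by ring]
  set Inn : ℝ → ℝ := fun v => ∫ l in Set.Ioi (0:ℝ),
      l ^ (2 * (p - 1) * (-1 / q) + 1) / (1 + q ^ 2 * l ^ 2 / 8) *
        Real.exp (-l ^ 2 / (4 * v)) with hInnd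
  have hInn0 : ∀ v, 0 ≤ Inn v := by
    intro v
    apply setIntegral_nonneg measurableSet_Ioi
    intro l hl
    have hl0 : (0:ℝ) < l := hl
    have hden : (0:ℝ) < 1 + q^2 * l^2 / 8 := by positivity
    positivity
  set C : ℝ := 1 / (2 ^ (2 * (p - 1) * (-1 / q) + 1) * Real.Gamma (1 + p/q) *
      Real.Gamma (1 - p/q) * Real.Gamma (1 + 1/q - p/q)) with hCd
  have hC0 : 0 ≤ C := by
    rw [hCd]
    have h1 : 0 < Real.Gamma (1 + p/q) := Real.Gamma_pos_of_pos (by linarith)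
    have h2 : 0 < Real.Gamma (1 - p/q) := Real.Gamma_pos_of_pos (by linarith)
    have h3 : 0 < Real.Gamma (1 + 1/q - p/q) := Real.Gamma_pos_of_pos (by linarith)
    positivity
  set V : ℝ := Real.Gamma (1/q) * 4 ^ ((1:ℝ)/q) *
      ((1/2) * ((q^2/8) ^ (-(1 - p/q)) * (Real.Gamma (1 - p/q) * Real.Gamma (p/q)))) with hVd
  -- the integral bound
  have hbound : (∫ v in Set.Ioi (0:ℝ),
      (max (s - x ^ q * v) 0) ^ (p/q) * v ^ ((-1 / q) - 1) * Inn v) ≤ s ^ (p/q) * V := by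
    have hle : ∀ v ∈ Set.Ioi (0:ℝ),
        (max (s - x ^ q * v) 0) ^ (p/q) * v ^ ((-1 / q) - 1) * Inn v ≤
          s ^ (p/q) * (v ^ ((-1 / q) - 1) * Inn v) := by
      intro v hv
      have hv0 : (0:ℝ) < v := hv
      have hxq : (0:ℝ) ≤ x ^ q := Real.rpow_nonneg hx q
      have hmax : max (s - x ^ q * v) 0 ≤ s :=
        max_le (by nlinarith) hs
      have h1 : (max (s - x ^ q * v) 0) ^ (p/q) ≤ s ^ (p/q) :=
        Real.rpow_le_rpow (le_max_right _ _) hmax hP0.le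
      have h2 : (0:ℝ) ≤ v ^ ((-1 / q) - 1) := (Real.rpow_pos_of_pos hv0 _).le
      calc (max (s - x ^ q * v) 0) ^ (p/q) * v ^ ((-1 / q) - 1) * Inn v
          ≤ s ^ (p/q) * v ^ ((-1 / q) - 1) * Inn v := by
            apply mul_le_mul_of_nonneg_right _ (hInn0 v)
            exact mul_le_mul_of_nonneg_right h1 h2
        _ = s ^ (p/q) * (v ^ ((-1 / q) - 1) * Inn v) := by ring
    calc (∫ v in Set.Ioi (0:ℝ),
        (max (s - x ^ q * v) 0) ^ (p/q) * v ^ ((-1 / q) - 1) * Inn v)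
        ≤ ∫ v in Set.Ioi (0:ℝ), s ^ (p/q) * (v ^ ((-1 / q) - 1) * Inn v) := by
          apply integral_mono_of_nonneg
          · filter_upwards [ae_restrict_mem measurableSet_Ioi] with v hv
            have hv0 : (0:ℝ) < v := hv
            have h2 : (0:ℝ) ≤ v ^ ((-1 / q) - 1) := (Real.rpow_pos_of_pos hv0 _).le
            have h1 : (0:ℝ) ≤ (max (s - x ^ q * v) 0) ^ (p/q) :=
              Real.rpow_nonneg (le_max_right _ _) _
            exact mul_nonneg (mul_nonneg h1 h2) (hInn0 v)
          · exact hint.const_mul _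
          · filter_upwards [ae_restrict_mem measurableSet_Ioi] with v hv using hle v hv
      _ = s ^ (p/q) * ∫ v in Set.Ioi (0:ℝ), v ^ ((-1 / q) - 1) * Inn v := integral_const_mul _ _
      _ = s ^ (p/q) * V := by rw [hInnd, hval, hVd]
  calc C * (∫ v in Set.Ioi (0:ℝ),
        (max (s - x ^ q * v) 0) ^ (p/q) * v ^ ((-1 / q) - 1) * Inn v)
      ≤ C * (s ^ (p/q) * V) := mul_le_mul_of_nonneg_left hbound hC0
    _ = (C * V) * s ^ (p/q) := by ring
    _ = (2 * Real.Gamma (1 + 1 / q) / (p * Real.Gamma (1 + 1 / q - p / q))) *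
        (q ^ 2 / 2) ^ (p / q) * s ^ (p / q) := by
        rw [hCd, hVd, const_eq hp hpq]
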